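/- Let X be a real normed space and t ≥ 1, τ ≥ 0. Then sup over x, y in the closed unit ball of ‖x+τy‖^t + ‖τx−y‖^t equals the sup over x, y in the unit sphere of the same quantity. -/

import Mathlib

open Real

lemma comb_le {θ μ A B C : ℝ} (hθ : 0 ≤ θ) (hθμ : θ + μ = 1)
    (h : C ≤ θ * A + μ * B) (hAB : A ≤ B) : C ≤ B := by
  calc C ≤ θ * A + μ * B := h
    _ ≤ θ * B + μ * B := add_le_add_left (mul_le_mul_of_nonneg_left hAB hθ) _
    _ = B := by rw [← add_mul, hθμ, one_mul]

lemma convexOn_norm_smul_add {X : Type*} [NormedAddCommGroup X] [NormedSpace ℝ X]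
    (t : ℝ) (ht : 1 ≤ t) (c : ℝ) (d : X) :
    ConvexOn ℝ Set.univ (fun z : X => ‖c • z + d‖ ^ t) := by
  have ht0 : (0:ℝ) ≤ t := le_trans zero_le_one ht
  refine ⟨convex_univ, ?_⟩
  intro x _ y _ θ μ hθ hμ hθμ
  have h1 : ‖c • (θ • x + μ • y) + d‖ ≤ θ * ‖c • x + d‖ + μ * ‖c • y + d‖ := by
    have : c • (θ • x + μ • y) + d = θ • (c • x + d) + μ • (c • y + d) := by
      rw [smul_add, smul_add, smul_add]
      rw [smul_comm c θ, smul_comm c μ]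
      have hd : (θ • d + μ • d) = d := by
        rw [← add_smul, hθμ, one_smul]
      abel_nf
      rw [← add_smul, hθμ, one_smul]
    rw [this]
    calc ‖θ • (c • x + d) + μ • (c • y + d)‖ ≤ ‖θ • (c • x + d)‖ + ‖μ • (c • y + d)‖ :=
          norm_add_le _ _
      _ = θ * ‖c • x + d‖ + μ * ‖c • y + d‖ := by
          rw [norm_smul, norm_smul, Real.norm_of_nonneg hθ, Real.norm_of_nonneg hμ]
  calc ‖c • (θ • x + μ • y) + d‖ ^ t ≤ (θ * ‖c • x + d‖ + μ * ‖c • y + d‖) ^ t :=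
        Real.rpow_le_rpow (norm_nonneg _) h1 ht0
    _ ≤ θ * ‖c • x + d‖ ^ t + μ * ‖c • y + d‖ ^ t := by
        have := (convexOn_rpow ht).2 (Set.mem_Ici.2 (norm_nonneg (c • x + d)))
          (Set.mem_Ici.2 (norm_nonneg (c • y + d))) hθ hμ hθμ
        simpa using this

/-- every point of the closed unit ball lies on a segment between two unit vectors -/
lemma ball_mem_segment {X : Type*} [NormedAddCommGroup X] [NormedSpace ℝ X] [Nontrivial X]
    {x : X} (hx : ‖x‖ ≤ 1) :
    ∃ a b : X, ‖a‖ = 1 ∧ ‖b‖ = 1 ∧ ∃ θ μ : ℝ, 0 ≤ θ ∧ 0 ≤ μ ∧ θ + μ = 1 ∧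
      x = θ • a + μ • b := by
  obtain ⟨u, hu⟩ := exists_norm_eq X (zero_le_one (α := ℝ))
  set φ : ℝ → ℝ := fun s => ‖x + s • u‖ with hφ
  have hcont : Continuous φ := by continuity
  have hφ0 : φ 0 ≤ 1 := by simpa [hφ] using hx
  have hφ2 : 1 ≤ φ 2 := by
    have h := norm_sub_norm_le ((2:ℝ) • u) (-x)
    simp only [norm_smul, norm_neg, sub_neg_eq_add, hu] at h
    rw [show ‖(2:ℝ)‖ = 2 by norm_num] at h
    have he : φ 2 = ‖(2:ℝ) • u + x‖ := by simp [hφ, add_comm]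
    rw [he]; linarith
  have hφm2 : 1 ≤ φ (-2) := by
    have h := norm_sub_norm_le ((-2:ℝ) • u) (-x)
    simp only [norm_smul, norm_neg, sub_neg_eq_add, hu] at h
    rw [show ‖(2:ℝ)‖ = 2 by norm_num] at h
    have he : φ (-2) = ‖(-2:ℝ) • u + x‖ := by simp [hφ, add_comm]
    rw [he]; linarith
  -- positive side
  obtain ⟨sp, hsp, hsp1⟩ : ∃ s ∈ Set.Icc (0:ℝ) 2, φ s = 1 := by
    have := intermediate_value_Icc (by norm_num : (0:ℝ) ≤ 2) (hcont.continuousOn)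
    have h1 : (1:ℝ) ∈ Set.Icc (φ 0) (φ 2) := ⟨hφ0, hφ2⟩
    obtain ⟨s, hs, hs1⟩ := this h1
    exact ⟨s, hs, hs1⟩
  obtain ⟨sm, hsm, hsm1⟩ : ∃ s ∈ Set.Icc (-2:ℝ) 0, φ s = 1 := by
    have := intermediate_value_Icc' (by norm_num : (-2:ℝ) ≤ 0) (hcont.continuousOn)
    have h1 : (1:ℝ) ∈ Set.Icc (φ 0) (φ (-2)) := ⟨hφ0, hφm2⟩
    obtain ⟨s, hs, hs1⟩ := this h1
    exact ⟨s, hs, hs1⟩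
  by_cases hd : sp - sm = 0
  · -- then sp = sm, and since sp ≥ 0 ≥ sm, both are 0, so ‖x‖ = 1
    have hsp0 : sp = 0 := le_antisymm (by linarith [hsm.2]) hsp.1
    have hx1 : ‖x‖ = 1 := by simpa [hφ, hsp0] using hsp1
    exact ⟨x, x, hx1, hx1, 1, 0, zero_le_one, le_refl 0, by ring, by simp⟩
  · have hdpos : 0 < sp - sm := lt_of_le_of_ne (by linarith [hsp.1, hsm.2]) (Ne.symm hd)
    refine ⟨x + sm • u, x + sp • u, hsm1, hsp1,
      sp / (sp - sm), -sm / (sp - sm), ?_, ?_, ?_, ?_⟩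
    · exact div_nonneg hsp.1 hdpos.le
    · exact div_nonneg (by linarith [hsm.2]) hdpos.le
    · field_simp; ring
    · have e1 : sp / (sp - sm) + -sm / (sp - sm) = 1 := by field_simp; ring
      have e2 : sp / (sp - sm) * sm + -sm / (sp - sm) * sp = 0 := by field_simp; ring
      have expand : ∀ θ μ c1 c2 : ℝ, θ • (x + c1 • u) + μ • (x + c2 • u)
          = (θ + μ) • x + (θ * c1 + μ * c2) • u := by
        intro θ μ c1 c2
        rw [smul_add, smul_add, smul_smul, smul_smul, add_smul, add_smul]
        abel
      rw [expand, e1, e2, one_smul, zero_smul, add_zero]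

theorem sup_ball_eq_sup_sphere (X : Type*) [NormedAddCommGroup X] [NormedSpace ℝ X]
    [Nontrivial X] (t τ : ℝ) (ht : 1 ≤ t) (hτ : 0 ≤ τ) :
    sSup {r : ℝ | ∃ x y : X, ‖x‖ ≤ 1 ∧ ‖y‖ ≤ 1 ∧
        r = ‖x + τ • y‖ ^ t + ‖τ • x - y‖ ^ t} =
    sSup {r : ℝ | ∃ x y : X, ‖x‖ = 1 ∧ ‖y‖ = 1 ∧
        r = ‖x + τ • y‖ ^ t + ‖τ • x - y‖ ^ t} := by
  have ht0 : (0:ℝ) ≤ t := le_trans zero_le_one ht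
  set B := {r : ℝ | ∃ x y : X, ‖x‖ ≤ 1 ∧ ‖y‖ ≤ 1 ∧
      r = ‖x + τ • y‖ ^ t + ‖τ • x - y‖ ^ t} with hB
  set S := {r : ℝ | ∃ x y : X, ‖x‖ = 1 ∧ ‖y‖ = 1 ∧
      r = ‖x + τ • y‖ ^ t + ‖τ • x - y‖ ^ t} with hS
  have hSB : S ⊆ B := by
    rintro r ⟨x, y, hx, hy, hr⟩
    exact ⟨x, y, hx.le, hy.le, hr⟩
  have hBbdd : BddAbove B := by
    refine ⟨(1 + τ) ^ t + (1 + τ) ^ t, ?_⟩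
    rintro r ⟨x, y, hx, hy, hr⟩
    have h1 : ‖x + τ • y‖ ≤ 1 + τ := by
      calc ‖x + τ • y‖ ≤ ‖x‖ + ‖τ • y‖ := norm_add_le _ _
        _ ≤ 1 + τ := by
          rw [norm_smul, Real.norm_of_nonneg hτ]
          nlinarith [norm_nonneg y]
    have h2 : ‖τ • x - y‖ ≤ 1 + τ := by
      calc ‖τ • x - y‖ ≤ ‖τ • x‖ + ‖y‖ := norm_sub_le _ _
        _ ≤ 1 + τ := by
          rw [norm_smul, Real.norm_of_nonneg hτ]
          nlinarith [norm_nonneg x]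
    rw [hr]
    have := Real.rpow_le_rpow (norm_nonneg (x + τ • y)) h1 ht0
    have := Real.rpow_le_rpow (norm_nonneg (τ • x - y)) h2 ht0
    linarith
  have hSbdd : BddAbove S := hBbdd.mono hSB
  obtain ⟨u, hu⟩ := exists_norm_eq X (zero_le_one (α := ℝ))
  have hSne : S.Nonempty := ⟨_, u, u, hu, hu, rfl⟩
  have hBne : B.Nonempty := hSB hSne.choose_spec |> fun h => ⟨_, h⟩
  -- key reduction
  have key : ∀ x y : X, ‖x‖ ≤ 1 → ‖y‖ ≤ 1 → ∃ a b : X, ‖a‖ = 1 ∧ ‖b‖ = 1 ∧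
      ‖x + τ • y‖ ^ t + ‖τ • x - y‖ ^ t ≤ ‖a + τ • b‖ ^ t + ‖τ • a - b‖ ^ t := by
    intro x y hx hy
    -- step 1: move x to sphere
    have step1 : ∃ a : X, ‖a‖ = 1 ∧
        ‖x + τ • y‖ ^ t + ‖τ • x - y‖ ^ t ≤ ‖a + τ • y‖ ^ t + ‖τ • a - y‖ ^ t := by
      have hg : ConvexOn ℝ Set.univ
          (fun z : X => ‖(1:ℝ) • z + τ • y‖ ^ t + ‖τ • z + -y‖ ^ t) :=
        (convexOn_norm_smul_add t ht 1 (τ • y)).add (convexOn_norm_smul_add t ht τ (-y))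
      obtain ⟨a, b, ha, hb, θ, μ, hθ, hμ, hθμ, hxab⟩ := ball_mem_segment hx
      have hcvx := hg.2 (Set.mem_univ a) (Set.mem_univ b) hθ hμ hθμ
      rw [← hxab] at hcvx
      simp only [one_smul, smul_eq_mul] at hcvx
      by_cases hab : ‖a + τ • y‖ ^ t + ‖τ • a + -y‖ ^ t ≤ ‖b + τ • y‖ ^ t + ‖τ • b + -y‖ ^ t
      · refine ⟨b, hb, ?_⟩
        have : ‖x + τ • y‖ ^ t + ‖τ • x + -y‖ ^ t ≤ ‖b + τ • y‖ ^ t + ‖τ • b + -y‖ ^ t := by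
          exact comb_le hθ hθμ hcvx hab
        simpa [sub_eq_add_neg] using this
      · refine ⟨a, ha, ?_⟩
        push_neg at hab
        have : ‖x + τ • y‖ ^ t + ‖τ • x + -y‖ ^ t ≤ ‖a + τ • y‖ ^ t + ‖τ • a + -y‖ ^ t := by
          exact comb_le (μ := θ) hμ (by linarith) (by linarith [hcvx]) hab.le
        simpa [sub_eq_add_neg] using this
    obtain ⟨a, ha, hstep1⟩ := step1
    -- step 2: move y to sphere
    have step2 : ∃ b : X, ‖b‖ = 1 ∧
        ‖a + τ • y‖ ^ t + ‖τ • a - y‖ ^ t ≤ ‖a + τ • b‖ ^ t + ‖τ • a - b‖ ^ t := by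
      have hg : ConvexOn ℝ Set.univ
          (fun w : X => ‖τ • w + a‖ ^ t + ‖(-1:ℝ) • w + τ • a‖ ^ t) :=
        (convexOn_norm_smul_add t ht τ a).add (convexOn_norm_smul_add t ht (-1) (τ • a))
      obtain ⟨b₁, b₂, hb₁, hb₂, θ, μ, hθ, hμ, hθμ, hyb⟩ := ball_mem_segment hy
      have hcvx := hg.2 (Set.mem_univ b₁) (Set.mem_univ b₂) hθ hμ hθμ
      rw [← hyb] at hcvx
      simp only [neg_one_smul, smul_eq_mul] at hcvx
      have hrw : ∀ w : X, ‖τ • w + a‖ = ‖a + τ • w‖ ∧ ‖-w + τ • a‖ = ‖τ • a - w‖ := by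
        intro w
        constructor
        · rw [add_comm]
        · rw [show -w + τ • a = τ • a - w by abel]
      by_cases hab : ‖τ • b₁ + a‖ ^ t + ‖-b₁ + τ • a‖ ^ t ≤ ‖τ • b₂ + a‖ ^ t + ‖-b₂ + τ • a‖ ^ t
      · refine ⟨b₂, hb₂, ?_⟩
        have h2 : ‖τ • y + a‖ ^ t + ‖-y + τ • a‖ ^ t ≤ ‖τ • b₂ + a‖ ^ t + ‖-b₂ + τ • a‖ ^ t := by
          exact comb_le hθ hθμ hcvx hab
        rw [(hrw y).1, (hrw y).2, (hrw b₂).1, (hrw b₂).2] at h2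
        exact h2
      · refine ⟨b₁, hb₁, ?_⟩
        push_neg at hab
        have h2 : ‖τ • y + a‖ ^ t + ‖-y + τ • a‖ ^ t ≤ ‖τ • b₁ + a‖ ^ t + ‖-b₁ + τ • a‖ ^ t := by
          exact comb_le (μ := θ) hμ (by linarith) (by linarith [hcvx]) hab.le
        rw [(hrw y).1, (hrw y).2, (hrw b₁).1, (hrw b₁).2] at h2
        exact h2
    obtain ⟨b, hb, hstep2⟩ := step2
    exact ⟨a, b, ha, hb, hstep1.trans hstep2⟩
  apply le_antisymm
  · apply csSup_le hBne
    rintro r ⟨x, y, hx, hy, hr⟩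
    obtain ⟨a, b, ha, hb, hle⟩ := key x y hx hy
    calc r ≤ ‖a + τ • b‖ ^ t + ‖τ • a - b‖ ^ t := hr ▸ hle
      _ ≤ sSup S := le_csSup hSbdd ⟨a, b, ha, hb, rfl⟩
  · exact csSup_le_csSup hBbdd hSne hSB
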